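/- Let K ⊂ ℂ be the closed unit disk together with the semicircular arcs {(1+1/n)e^{2πit} : |t| ≤ 1/4} for all integers n ≥ 1. Then K is compact, and every point e^{2πit} with |t| < 1/4 on the unit circle is inaccessible from ℂ ∖ K: there is no continuous path γ : [0,1] → ℂ with γ(s) ∈ ℂ∖K for s < 1 and γ(1) = e^{2πit}. -/

import Mathlib

open Set Complex

private lemma exp_form (t : ℝ) :
    Complex.exp (2 * Real.pi * Complex.I * t) =
      Complex.exp (((2 * Real.pi * t : ℝ) : ℂ) * Complex.I) := by
  push_cast; ring_nf

theorem stmt13 :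
    IsCompact (Metric.closedBall (0 : ℂ) 1 ∪
      ⋃ n : ℕ, {z : ℂ | ∃ t : ℝ, |t| ≤ 1 / 4 ∧
        z = (1 + 1 / ((n : ℂ) + 1)) * Complex.exp (2 * Real.pi * Complex.I * t)}) ∧
    ∀ t : ℝ, |t| < 1 / 4 →
      ¬ ∃ γ : ℝ → ℂ, ContinuousOn γ (Set.Icc 0 1) ∧
        (∀ u ∈ Set.Ico (0 : ℝ) 1,
          γ u ∉ Metric.closedBall (0 : ℂ) 1 ∪
            ⋃ n : ℕ, {z : ℂ | ∃ t' : ℝ, |t'| ≤ 1 / 4 ∧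
              z = (1 + 1 / ((n : ℂ) + 1)) * Complex.exp (2 * Real.pi * Complex.I * t')}) ∧
        γ 1 = Complex.exp (2 * Real.pi * Complex.I * t) := by
  constructor
  · -- Compactness
    have hS : IsCompact (insert (1 : ℝ) (Set.range fun n : ℕ => 1 + 1 / ((n : ℝ) + 1))) := by
      apply Filter.Tendsto.isCompact_insert_range
      have h := (tendsto_one_div_add_atTop_nhds_zero_nat).const_add (1 : ℝ)
      simpa using h
    have hC : IsCompact ((fun p : ℝ × ℝ =>
        (p.1 : ℂ) * Complex.exp (2 * Real.pi * Complex.I * p.2)) ''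
        ((insert (1 : ℝ) (Set.range fun n : ℕ => 1 + 1 / ((n : ℝ) + 1))) ×ˢ
          Icc (-(1/4) : ℝ) (1/4))) := by
      apply (hS.prod isCompact_Icc).image
      fun_prop
    have hK : (Metric.closedBall (0 : ℂ) 1 ∪
        ⋃ n : ℕ, {z : ℂ | ∃ t : ℝ, |t| ≤ 1 / 4 ∧
          z = (1 + 1 / ((n : ℂ) + 1)) * Complex.exp (2 * Real.pi * Complex.I * t)}) =
        Metric.closedBall (0 : ℂ) 1 ∪ ((fun p : ℝ × ℝ =>
        (p.1 : ℂ) * Complex.exp (2 * Real.pi * Complex.I * p.2)) ''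
        ((insert (1 : ℝ) (Set.range fun n : ℕ => 1 + 1 / ((n : ℝ) + 1))) ×ˢ
          Icc (-(1/4) : ℝ) (1/4))) := by
      ext z
      simp only [mem_union, mem_iUnion, mem_setOf_eq, mem_image, mem_prod, mem_insert_iff,
        mem_range, Metric.mem_closedBall, Set.mem_Icc]
      constructor
      · rintro (h | ⟨n, t, ht, rfl⟩)
        · exact Or.inl h
        · refine Or.inr ⟨(1 + 1 / ((n : ℝ) + 1), t), ⟨Or.inr ⟨n, rfl⟩, ?_⟩, ?_⟩
          · exact abs_le.mp ht
          · push_cast; ring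
      · rintro (h | ⟨⟨r, t⟩, ⟨hr | ⟨n, rfl⟩, ht⟩, rfl⟩)
        · exact Or.inl h
        · left
          subst hr
          rw [dist_zero_right]
          simp only [norm_mul]
          rw [exp_form, Complex.norm_exp_ofReal_mul_I]
          simp
        · right
          exact ⟨n, t, abs_le.mpr ht, by push_cast; ring⟩
    rw [hK]
    exact (isCompact_closedBall _ _).union hC
  · -- Inaccessibility
    rintro t ht ⟨γ, hγc, hγK, hγ1⟩
    set z₀ := Complex.exp (2 * Real.pi * Complex.I * t) with hz₀
    have hπ := Real.pi_pos
    have ht' := abs_lt.mp ht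
    have hre : 0 < z₀.re := by
      rw [hz₀, exp_form, Complex.exp_ofReal_mul_I_re]
      apply Real.cos_pos_of_mem_Ioo
      constructor <;> [nlinarith; nlinarith]
    -- continuity at 1
    have h1mem : (1 : ℝ) ∈ Icc (0 : ℝ) 1 := by constructor <;> norm_num
    have hcw : ContinuousWithinAt γ (Icc 0 1) 1 := hγc 1 h1mem
    rw [Metric.continuousWithinAt_iff] at hcw
    obtain ⟨δ, hδ, hδ'⟩ := hcw z₀.re hre
    set δ' := min δ 1 with hδ'def
    have hδ'pos : 0 < δ' := lt_min hδ one_pos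
    have hδ'le : δ' ≤ 1 := min_le_right _ _
    set u₀ := 1 - δ' / 2 with hu₀
    have hu₀0 : (0 : ℝ) ≤ u₀ := by simp [hu₀]; linarith
    have hu₀1 : u₀ ≤ 1 := by simp [hu₀]; linarith
    have hclose : ∀ u ∈ Icc u₀ 1, dist (γ u) z₀ < z₀.re := by
      intro u hu
      rcases hu with ⟨h1, h2⟩
      rcases eq_or_lt_of_le h2 with rfl | h2'
      · rw [hγ1]; simpa using hre
      · have : dist u 1 < δ := by
          rw [Real.dist_eq, abs_of_nonpos (by linarith)]
          have : δ' ≤ δ := min_le_left _ _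
          simp only [hu₀] at h1
          linarith
        have := hδ' (show u ∈ Icc (0:ℝ) 1 from ⟨le_trans hu₀0 h1, le_of_lt h2'⟩) this
        rwa [hγ1] at this
    have hrepos : ∀ u ∈ Icc u₀ 1, 0 < (γ u).re := by
      intro u hu
      have h := hclose u hu
      have h2 : |(γ u - z₀).re| ≤ ‖γ u - z₀‖ := Complex.abs_re_le_norm _
      rw [Complex.sub_re] at h2
      rw [Complex.dist_eq] at h
      have h3 := abs_lt.mp (lt_of_le_of_lt h2 h)
      linarith [h3.1]
    -- the modulus function
    have hf1 : ‖γ 1‖ = 1 := by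
      rw [hγ1, hz₀, exp_form, Complex.norm_exp_ofReal_mul_I]
    have hu₀Ico : u₀ ∈ Ico (0 : ℝ) 1 := ⟨hu₀0, by simp [hu₀]; linarith⟩
    have hfu₀ : 1 < ‖γ u₀‖ := by
      have h := hγK u₀ hu₀Ico
      by_contra hle
      push_neg at hle
      exact h (Or.inl (mem_closedBall_zero_iff.mpr hle))
    obtain ⟨m, hm⟩ := exists_nat_one_div_lt (show (0:ℝ) < ‖γ u₀‖ - 1 by linarith)
    set r := 1 + 1 / ((m : ℝ) + 1) with hr
    have hr1 : 1 < r := by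
      rw [hr]
      exact lt_add_of_pos_right 1 (by positivity)
    have hcf : ContinuousOn (fun u => ‖γ u‖) (Icc u₀ 1) :=
      continuous_norm.comp_continuousOn (hγc.mono (Icc_subset_Icc hu₀0 le_rfl))
    have hrmem : r ∈ Icc ‖γ 1‖ ‖γ u₀‖ := by
      rw [hf1]
      exact ⟨le_of_lt hr1, by rw [hr]; linarith⟩
    obtain ⟨u₁, hu₁mem, hu₁0⟩ := intermediate_value_Icc' hu₀1 hcf hrmem
    have hu₁ : ‖γ u₁‖ = r := hu₁0
    have hu₁lt : u₁ < 1 := by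
      rcases lt_or_eq_of_le hu₁mem.2 with h | h
      · exact h
      · exfalso; rw [h, hf1] at hu₁; linarith
    have hu₁Ico : u₁ ∈ Ico (0 : ℝ) 1 := ⟨le_trans hu₀0 hu₁mem.1, hu₁lt⟩
    -- γ u₁ lies on arc m
    apply hγK u₁ hu₁Ico
    right
    rw [mem_iUnion]
    set θ := (γ u₁).arg with hθ
    refine ⟨m, θ / (2 * Real.pi), ?_, ?_⟩
    · have hre1 : 0 ≤ (γ u₁).re := le_of_lt (hrepos u₁ hu₁mem)
      have harg : |θ| ≤ Real.pi / 2 := Complex.abs_arg_le_pi_div_two_iff.mpr hre1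
      rw [abs_div, abs_of_pos (by positivity : (0:ℝ) < 2 * Real.pi)]
      rw [div_le_div_iff₀ (by positivity) (by norm_num)]
      nlinarith
    · have hx := Complex.norm_mul_exp_arg_mul_I (γ u₁)
      rw [hu₁, ← hθ] at hx
      rw [← hx]
      have hcast : ((θ / (2 * Real.pi) : ℝ) : ℂ) = (θ : ℂ) / (2 * (Real.pi : ℂ)) := by
        push_cast; ring
      have hπne : ((Real.pi : ℂ)) ≠ 0 := by
        exact_mod_cast Real.pi_ne_zero
      have hexp : 2 * (Real.pi : ℂ) * Complex.I * ((θ : ℂ) / (2 * (Real.pi : ℂ))) =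
          (θ : ℂ) * Complex.I := by
        field_simp
      rw [hcast, hexp, hr]
      push_cast
      ring
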